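/- Let f : [0, ∞) → [0, ∞) be measurable and suppose there exist K > 0 and β > 1 such that ∫_t^∞ f(τ) dτ ≤ K·(1+t)^{−β} for all t ≥ 1. Then there exists a constant C > 0 depending only on β such that ∫_t^∞ √(f(τ)) dτ ≤ C·√K·(1+t)^{(1−β)/2} for all t ≥ 1. -/

import Mathlib

open MeasureTheory Set ENNReal

/-- Dyadic decomposition of `(t, ∞)`. -/
lemma aux_dyadic_union {t : ℝ} (ht : 0 < t) :
    Set.Ioi t = ⋃ n : ℕ, Set.Ioc ((2:ℝ)^n * t) ((2:ℝ)^(n+1) * t) := by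
  ext x
  simp only [Set.mem_Ioi, Set.mem_iUnion, Set.mem_Ioc]
  constructor
  · intro hx
    have hxt : 1 < x / t := (one_lt_div ht).2 hx
    obtain ⟨n, h1, h2⟩ := exists_nat_pow_near (le_of_lt hxt) (one_lt_two (α := ℝ))
    rcases eq_or_lt_of_le h1 with h1 | h1
    · -- x / t = 2 ^ n, must have n ≥ 1
      cases n with
      | zero => simp at h1; rw [← h1] at hxt; simp at hxt
      | succ m =>
        refine ⟨m, ?_, ?_⟩
        · have : (2:ℝ)^m < 2^(m+1) := by
            have := pow_lt_pow_right₀ (one_lt_two (α := ℝ)) (Nat.lt_succ_self m)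
            exact this
          have hx' : x = 2^(m+1) * t := by
            field_simp at h1; linarith [h1]
          rw [hx']
          exact mul_lt_mul_of_pos_right this ht
        · have hx' : x = 2^(m+1) * t := by field_simp at h1; linarith [h1]
          rw [hx']
    · refine ⟨n, ?_, ?_⟩
      · calc (2:ℝ)^n * t < (x / t) * t := mul_lt_mul_of_pos_right h1 ht
          _ = x := div_mul_cancel₀ x (ne_of_gt ht)
      · have := mul_le_mul_of_nonneg_right (le_of_lt h2) (le_of_lt ht)
        calc x = (x / t) * t := (div_mul_cancel₀ x (ne_of_gt ht)).symm
          _ ≤ 2^(n+1) * t := this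
  · rintro ⟨n, h1, _⟩
    have : t ≤ (2:ℝ)^n * t := le_mul_of_one_le_left (le_of_lt ht) (one_le_pow₀ one_le_two)
    linarith

/-- Cauchy–Schwarz (Hölder) for the lintegral of a square root over a set. -/
lemma aux_lintegral_sqrt_le {g : ℝ → ℝ≥0∞} (hg : Measurable g) (s : Set ℝ) :
    ∫⁻ x in s, (g x) ^ (1/2 : ℝ) ≤
      (∫⁻ x in s, g x) ^ (1/2 : ℝ) * (MeasureTheory.volume s) ^ (1/2 : ℝ) := by
  have hconj : Real.HolderConjugate 2 2 := by constructor <;> norm_num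
  have hmeas : AEMeasurable (fun x => (g x) ^ (1/2 : ℝ)) (volume.restrict s) :=
    (hg.pow_const _).aemeasurable
  have h := ENNReal.lintegral_mul_le_Lp_mul_Lq (volume.restrict s) hconj hmeas
    aemeasurable_const (g := fun _ => (1 : ℝ≥0∞))
  simp only [Pi.mul_apply, mul_one, ENNReal.one_rpow, MeasureTheory.lintegral_one,
    Measure.restrict_apply_univ] at h
  calc ∫⁻ x in s, (g x) ^ (1/2 : ℝ)
      ≤ (∫⁻ x in s, ((g x) ^ (1/2:ℝ)) ^ (2:ℝ)) ^ (1/(2:ℝ)) *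
        (MeasureTheory.volume s) ^ (1/(2:ℝ)) := h
    _ = (∫⁻ x in s, g x) ^ (1/2 : ℝ) * (MeasureTheory.volume s) ^ (1/2 : ℝ) := by
        congr 2
        refine lintegral_congr fun x => ?_
        rw [← ENNReal.rpow_mul]
        norm_num

/-- The real per-interval estimate. -/
lemma aux_term_bound {β K t : ℝ} (hβ : 1 < β) (hK : 0 < K) (ht : 1 ≤ t) (n : ℕ) :
    (K * (1 + 2^n * t) ^ (-β)) ^ (1/2:ℝ) * ((2:ℝ)^n * t) ^ (1/2:ℝ) ≤
      (Real.sqrt K * (2:ℝ)^((β-1)/2 : ℝ) * (1+t)^((1-β)/2)) * ((2:ℝ)^((1-β)/2 : ℝ))^n := by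
  have ht0 : (0:ℝ) < t := lt_of_lt_of_le one_pos ht
  have h2n : (0:ℝ) < 2^n := pow_pos two_pos n
  have ha : (0:ℝ) < 2^n * t := mul_pos h2n ht0
  have ha1 : (0:ℝ) < 1 + 2^n * t := by linarith
  set e : ℝ := (1 - β)/2 with he
  have he0 : e < 0 := by rw [he]; linarith
  -- rewrite LHS
  have hL : (K * (1 + 2^n * t) ^ (-β)) ^ (1/2:ℝ) * ((2:ℝ)^n * t) ^ (1/2:ℝ)
      = K ^ (1/2:ℝ) * ((1 + 2^n * t) ^ (-(β/2) : ℝ) * ((2:ℝ)^n * t) ^ (1/2:ℝ)) := by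
    rw [Real.mul_rpow (le_of_lt hK) (Real.rpow_nonneg (le_of_lt ha1) _),
      ← Real.rpow_mul (le_of_lt ha1)]
    have hexp : -β * (1/2) = -(β/2) := by ring
    rw [hexp]; ring
  have step1 : (1 + 2^n * t) ^ (-(β/2) : ℝ) ≤ ((2:ℝ)^n * t) ^ (-(β/2) : ℝ) :=
    Real.rpow_le_rpow_of_nonpos ha (by linarith) (by linarith)
  have step2 : ((2:ℝ)^n * t) ^ (-(β/2) : ℝ) * ((2:ℝ)^n * t) ^ (1/2:ℝ)
      = ((2:ℝ)^n * t) ^ e := by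
    rw [← Real.rpow_add ha]; congr 1; rw [he]; ring
  have step3 : ((2:ℝ)^n * t) ^ e = ((2:ℝ)^(e))^n * t ^ e := by
    rw [Real.mul_rpow (le_of_lt h2n) (le_of_lt ht0)]
    congr 1
    rw [← Real.rpow_natCast (2:ℝ) n, ← Real.rpow_mul (by norm_num : (0:ℝ) ≤ 2),
      mul_comm (n:ℝ) e, Real.rpow_mul (by norm_num : (0:ℝ) ≤ 2), Real.rpow_natCast]
  have step4 : t ^ e ≤ (2:ℝ)^((β-1)/2 : ℝ) * (1+t)^e := by
    have h1 : ((1+t)/2 : ℝ) ≤ t := by linarith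
    have h2 : (0:ℝ) < (1+t)/2 := by linarith
    have := Real.rpow_le_rpow_of_nonpos h2 h1 (le_of_lt he0)
    calc t ^ e ≤ ((1+t)/2) ^ e := this
      _ = (1+t)^e / (2:ℝ)^e := Real.div_rpow (by linarith) (by norm_num) e
      _ = (2:ℝ)^((β-1)/2 : ℝ) * (1+t)^e := by
          rw [div_eq_mul_inv, ← Real.rpow_neg (by norm_num : (0:ℝ) ≤ 2)]
          have hne : -e = (β-1)/2 := by rw [he]; ring
          rw [hne, mul_comm]
  have hKs : K ^ (1/2:ℝ) = Real.sqrt K := (Real.sqrt_eq_rpow K).symm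
  calc (K * (1 + 2^n * t) ^ (-β)) ^ (1/2:ℝ) * ((2:ℝ)^n * t) ^ (1/2:ℝ)
      = K ^ (1/2:ℝ) * ((1 + 2^n * t) ^ (-(β/2):ℝ) * ((2:ℝ)^n * t) ^ (1/2:ℝ)) := hL
    _ ≤ K ^ (1/2:ℝ) * (((2:ℝ)^n * t) ^ (-(β/2):ℝ) * ((2:ℝ)^n * t) ^ (1/2:ℝ)) := by
        have h0 : (0:ℝ) ≤ K ^ (1/2:ℝ) := Real.rpow_nonneg (le_of_lt hK) _
        have h1 : (0:ℝ) ≤ ((2:ℝ)^n * t) ^ (1/2:ℝ) := Real.rpow_nonneg (le_of_lt ha) _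
        exact mul_le_mul_of_nonneg_left (mul_le_mul_of_nonneg_right step1 h1) h0
    _ = K ^ (1/2:ℝ) * (((2:ℝ)^(e))^n * t ^ e) := by rw [step2, step3]
    _ ≤ K ^ (1/2:ℝ) * (((2:ℝ)^(e))^n * ((2:ℝ)^((β-1)/2 : ℝ) * (1+t)^e)) := by
        have h0 : (0:ℝ) ≤ K ^ (1/2:ℝ) := Real.rpow_nonneg (le_of_lt hK) _
        have h1 : (0:ℝ) ≤ ((2:ℝ)^(e))^n := pow_nonneg (Real.rpow_nonneg (by norm_num) _) n
        exact mul_le_mul_of_nonneg_left (mul_le_mul_of_nonneg_left step4 h1) h0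
    _ = (Real.sqrt K * (2:ℝ)^((β-1)/2 : ℝ) * (1+t)^e) * ((2:ℝ)^(e))^n := by
        rw [hKs]; ring

theorem stmt8 (β : ℝ) (hβ : 1 < β) :
    ∃ C > (0 : ℝ), ∀ (f : ℝ → ℝ) (K : ℝ), 0 < K → Measurable f → (∀ t, 0 ≤ f t) →
      (∀ t ≥ (1 : ℝ), MeasureTheory.IntegrableOn f (Set.Ioi t)) →
      (∀ t ≥ (1 : ℝ), ∫ τ in Set.Ioi t, f τ ≤ K * (1 + t) ^ (-β)) →
      ∀ t ≥ (1 : ℝ),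
        MeasureTheory.IntegrableOn (fun τ => Real.sqrt (f τ)) (Set.Ioi t) ∧
          ∫ τ in Set.Ioi t, Real.sqrt (f τ) ≤
            C * Real.sqrt K * (1 + t) ^ ((1 - β) / 2) := by
  set e : ℝ := (1 - β)/2 with he
  have he0 : e < 0 := by rw [he]; linarith
  set r : ℝ := (2:ℝ) ^ e with hr
  have hr0 : 0 < r := Real.rpow_pos_of_pos two_pos e
  have hr1 : r < 1 := Real.rpow_lt_one_of_one_lt_of_neg one_lt_two he0
  set D : ℝ := (2:ℝ) ^ ((β-1)/2 : ℝ) with hD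
  have hD0 : 0 < D := Real.rpow_pos_of_pos two_pos _
  refine ⟨D * (1 - r)⁻¹, mul_pos hD0 (inv_pos.2 (by linarith)), ?_⟩
  intro f K hK hfm hfnn hfi hfb t ht
  have ht0 : (0:ℝ) < t := lt_of_lt_of_le one_pos ht
  have h1t : (0:ℝ) < 1 + t := by linarith
  -- the key lintegral bound
  have key : ∫⁻ τ in Set.Ioi t, ENNReal.ofReal (Real.sqrt (f τ)) ≤
      ENNReal.ofReal ((D * (1 - r)⁻¹) * Real.sqrt K * (1 + t) ^ e) := by
    have hmem : ∀ n : ℕ, MeasurableSet (Set.Ioc ((2:ℝ)^n * t) ((2:ℝ)^(n+1) * t)) :=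
      fun n => measurableSet_Ioc
    have hdisj : Pairwise (Function.onFun Disjoint fun n : ℕ =>
        Set.Ioc ((2:ℝ)^n * t) ((2:ℝ)^(n+1) * t)) := by
      intro m n hmn
      rcases lt_or_gt_of_ne hmn with h | h
      · refine Set.Ioc_disjoint_Ioc.2 ?_
        have h1 : (2:ℝ)^(m+1) ≤ 2^n := pow_le_pow_right₀ one_le_two h
        have h2 := mul_le_mul_of_nonneg_right h1 (le_of_lt ht0)
        exact le_trans inf_le_left (le_trans h2 le_sup_right)
      · refine Set.Ioc_disjoint_Ioc.2 ?_
        have h1 : (2:ℝ)^(n+1) ≤ 2^m := pow_le_pow_right₀ one_le_two h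
        have h2 := mul_le_mul_of_nonneg_right h1 (le_of_lt ht0)
        exact le_trans inf_le_right (le_trans h2 le_sup_left)
    -- per-interval bound
    have hsm : Measurable fun τ => ENNReal.ofReal (f τ) :=
      ENNReal.measurable_ofReal.comp hfm
    have hterm : ∀ n : ℕ,
        ∫⁻ τ in Set.Ioc ((2:ℝ)^n * t) ((2:ℝ)^(n+1) * t), ENNReal.ofReal (Real.sqrt (f τ))
          ≤ ENNReal.ofReal (((Real.sqrt K * D * (1+t)^e)) * r^n) := by
      intro n
      set a : ℝ := (2:ℝ)^n * t with haa
      have h2n : (0:ℝ) < 2^n := pow_pos two_pos n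
      have ha : (0:ℝ) < a := mul_pos h2n ht0
      have hat : 1 ≤ a := le_trans ht (le_mul_of_one_le_left (le_of_lt ht0) (one_le_pow₀ one_le_two))
      have hb : (2:ℝ)^(n+1) * t = 2 * a := by rw [haa, pow_succ]; ring
      have hsqrt : ∀ τ, ENNReal.ofReal (Real.sqrt (f τ))
          = (ENNReal.ofReal (f τ)) ^ (1/2 : ℝ) := by
        intro τ
        rw [Real.sqrt_eq_rpow, ENNReal.ofReal_rpow_of_nonneg (hfnn τ) (by norm_num)]
      have hcs := aux_lintegral_sqrt_le hsm (Set.Ioc a ((2:ℝ)^(n+1) * t))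
      have hIoc_sub : Set.Ioc a ((2:ℝ)^(n+1) * t) ⊆ Set.Ioi a := fun x hx => hx.1
      have hint : ∫⁻ τ in Set.Ioc a ((2:ℝ)^(n+1) * t), ENNReal.ofReal (f τ)
          ≤ ENNReal.ofReal (K * (1 + a) ^ (-β)) := by
        calc ∫⁻ τ in Set.Ioc a ((2:ℝ)^(n+1) * t), ENNReal.ofReal (f τ)
            ≤ ∫⁻ τ in Set.Ioi a, ENNReal.ofReal (f τ) := lintegral_mono_set hIoc_sub
          _ = ENNReal.ofReal (∫ τ in Set.Ioi a, f τ) :=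
              (ofReal_integral_eq_lintegral_ofReal (hfi a hat)
                (Filter.Eventually.of_forall hfnn)).symm
          _ ≤ ENNReal.ofReal (K * (1 + a) ^ (-β)) := ENNReal.ofReal_le_ofReal (hfb a hat)
      have hvol : MeasureTheory.volume (Set.Ioc a ((2:ℝ)^(n+1) * t)) = ENNReal.ofReal a := by
        rw [Real.volume_Ioc, hb]; congr 1; ring
      calc ∫⁻ τ in Set.Ioc a ((2:ℝ)^(n+1) * t), ENNReal.ofReal (Real.sqrt (f τ))
          = ∫⁻ τ in Set.Ioc a ((2:ℝ)^(n+1) * t), (ENNReal.ofReal (f τ)) ^ (1/2:ℝ) := by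
            refine lintegral_congr fun τ => hsqrt τ
        _ ≤ (∫⁻ τ in Set.Ioc a ((2:ℝ)^(n+1) * t), ENNReal.ofReal (f τ)) ^ (1/2:ℝ) *
            (MeasureTheory.volume (Set.Ioc a ((2:ℝ)^(n+1) * t))) ^ (1/2:ℝ) := hcs
        _ ≤ (ENNReal.ofReal (K * (1 + a) ^ (-β))) ^ (1/2:ℝ) *
            (ENNReal.ofReal a) ^ (1/2:ℝ) := by
            rw [hvol]
            exact mul_le_mul_left (ENNReal.rpow_le_rpow hint (by norm_num)) _
        _ = ENNReal.ofReal ((K * (1 + a) ^ (-β)) ^ (1/2:ℝ) * a ^ (1/2:ℝ)) := by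
            rw [ENNReal.ofReal_rpow_of_nonneg ?_ (by norm_num : (0:ℝ) ≤ 1/2),
              ENNReal.ofReal_rpow_of_nonneg (le_of_lt ha) (by norm_num : (0:ℝ) ≤ 1/2),
              ← ENNReal.ofReal_mul (Real.rpow_nonneg ?_ _)]
            · positivity
            · positivity
        _ ≤ ENNReal.ofReal (((Real.sqrt K * D * (1+t)^e)) * r^n) :=
            ENNReal.ofReal_le_ofReal (aux_term_bound hβ hK ht n)
    calc ∫⁻ τ in Set.Ioi t, ENNReal.ofReal (Real.sqrt (f τ))
        = ∑' n : ℕ, ∫⁻ τ in Set.Ioc ((2:ℝ)^n * t) ((2:ℝ)^(n+1) * t),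
            ENNReal.ofReal (Real.sqrt (f τ)) := by
          rw [aux_dyadic_union ht0, lintegral_iUnion hmem hdisj]
      _ ≤ ∑' n : ℕ, ENNReal.ofReal (((Real.sqrt K * D * (1+t)^e)) * r^n) :=
          ENNReal.tsum_le_tsum hterm
      _ = ∑' n : ℕ, ENNReal.ofReal ((Real.sqrt K * D * (1+t)^e)) *
            (ENNReal.ofReal r)^n := by
          refine tsum_congr fun n => ?_
          rw [ENNReal.ofReal_mul (by positivity), ENNReal.ofReal_pow (le_of_lt hr0)]
      _ = ENNReal.ofReal ((Real.sqrt K * D * (1+t)^e)) * (1 - ENNReal.ofReal r)⁻¹ := by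
          rw [ENNReal.tsum_mul_left, ENNReal.tsum_geometric]
      _ = ENNReal.ofReal ((D * (1 - r)⁻¹) * Real.sqrt K * (1 + t) ^ e) := by
          rw [← ENNReal.ofReal_one, ← ENNReal.ofReal_sub 1 (le_of_lt hr0),
            ← ENNReal.ofReal_inv_of_pos (by linarith : (0:ℝ) < 1 - r),
            ← ENNReal.ofReal_mul (by positivity)]
          congr 1; ring
  -- conclude
  have hmeas : MeasureTheory.AEStronglyMeasurable (fun τ => Real.sqrt (f τ))
      (volume.restrict (Set.Ioi t)) :=
    (Real.continuous_sqrt.measurable.comp hfm).aestronglyMeasurable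
  have hnn : 0 ≤ᵐ[volume.restrict (Set.Ioi t)] fun τ => Real.sqrt (f τ) :=
    Filter.Eventually.of_forall fun τ => Real.sqrt_nonneg _
  have hfin : ∫⁻ τ in Set.Ioi t, ENNReal.ofReal (Real.sqrt (f τ)) < ⊤ :=
    lt_of_le_of_lt key ENNReal.ofReal_lt_top
  constructor
  · exact ⟨hmeas, (hasFiniteIntegral_iff_ofReal hnn).2 hfin⟩
  · rw [integral_eq_lintegral_of_nonneg_ae hnn hmeas]
    refine ENNReal.toReal_le_of_le_ofReal ?_ key
    exact mul_nonneg (mul_nonneg (mul_nonneg (le_of_lt hD0)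
      (inv_nonneg.2 (by linarith))) (Real.sqrt_nonneg K))
      (Real.rpow_nonneg (le_of_lt h1t) e)
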